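/- For every x ∈ ℝ⁴ with x ≠ 0, the integral of 1/(‖x-y‖²(1+‖y‖⁴)) over the ball {y ∈ ℝ⁴ : ‖y-x‖ ≤ ‖x‖/2} centered at x satisfies ∫_{‖y-x‖ ≤ ‖x‖/2} dy/(‖x-y‖²(1+‖y‖⁴)) ≤ 4π² ‖x‖^{-2}. -/

import Mathlib

open MeasureTheory Real

open MeasureTheory Real Set Metric

local notation "E4" => EuclideanSpace ℝ (Fin 4)

lemma polar4 (f : ℝ → ENNReal) (hf : Measurable f) :
    ∫⁻ z : E4, f ‖z‖ =
      4 * volume (Metric.ball (0 : E4) 1) *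
        ∫⁻ r in Set.Ioi (0 : ℝ), ENNReal.ofReal (r ^ 3) * f r := by
  have hdim : Module.finrank ℝ E4 = 4 := by simp [finrank_euclideanSpace]
  have h31 : Module.finrank ℝ E4 - 1 = 3 := by rw [hdim]
  have h1 : ∫⁻ z : E4, f ‖z‖ =
      ∫⁻ z : ({0}ᶜ : Set E4), f ‖z.1‖ ∂((volume : Measure E4).comap Subtype.val) := by
    rw [lintegral_subtype_comap (measurableSet_singleton (0:E4)).compl (fun z => f ‖z‖),
      restrict_compl_singleton]
  have hF : Measurable fun p : (Metric.sphere (0:E4) 1 × Set.Ioi (0:ℝ)) => f p.2.1 :=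
    hf.comp (measurable_subtype_coe.comp measurable_snd)
  have h2 : ∫⁻ z : ({0}ᶜ : Set E4), f ‖z.1‖ ∂((volume : Measure E4).comap Subtype.val)
      = ∫⁻ p, f p.2.1 ∂((volume : Measure E4).toSphere.prod
          (Measure.volumeIoiPow (Module.finrank ℝ E4 - 1))) := by
    rw [← (Measure.measurePreserving_homeomorphUnitSphereProd
        (volume : Measure E4)).lintegral_comp hF]
    simp
  have h3 : ∫⁻ p, f p.2.1 ∂((volume : Measure E4).toSphere.prod
          (Measure.volumeIoiPow (Module.finrank ℝ E4 - 1)))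
      = (volume : Measure E4).toSphere univ *
          ∫⁻ r, f r.1 ∂(Measure.volumeIoiPow (Module.finrank ℝ E4 - 1)) := by
    rw [lintegral_prod _ (hF.aemeasurable)]
    simp [lintegral_const, mul_comm]
  have h4 : ∫⁻ r, f r.1 ∂(Measure.volumeIoiPow (Module.finrank ℝ E4 - 1))
      = ∫⁻ r in Set.Ioi (0:ℝ), ENNReal.ofReal (r ^ 3) * f r := by
    simp only [h31]
    rw [Measure.volumeIoiPow,
      lintegral_withDensity_eq_lintegral_mul _
        ((measurable_subtype_coe.pow_const 3).ennreal_ofReal)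
        (show Measurable fun r : Set.Ioi (0:ℝ) => f r.1 from hf.comp measurable_subtype_coe),
      ← lintegral_subtype_comap measurableSet_Ioi
        (fun r => ENNReal.ofReal (r ^ 3) * f r)]
    rfl
  rw [h1, h2, h3, h4, Measure.toSphere_apply_univ, hdim]
  norm_num

lemma ball_vol : volume (Metric.ball (0 : E4) 1) = ENNReal.ofReal (π ^ 2 / 2) := by
  rw [EuclideanSpace.volume_ball]
  have h3 : ((Fintype.card (Fin 4) : ℝ) / 2 + 1) = (3 : ℝ) := by
    simp; norm_num
  have hg : Real.Gamma ((Fintype.card (Fin 4) : ℝ) / 2 + 1) = 2 := by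
    rw [h3]
    rw [show (3:ℝ) = (2:ℕ) + 1 by norm_num, Real.Gamma_nat_eq_factorial]
    norm_num
  rw [hg]
  have hs : Real.sqrt π ^ Fintype.card (Fin 4) = π ^ 2 := by
    simp only [Fintype.card_fin]
    rw [show (4:ℕ) = 2 * 2 from rfl, pow_mul, Real.sq_sqrt pi_nonneg]
  rw [hs]
  simp

lemma cball_lintegral (R : ℝ) (hR : 0 < R) :
    ∫⁻ z in Metric.closedBall (0 : E4) R, ENNReal.ofReal (‖z‖⁻¹ ^ 2) =
      ENNReal.ofReal (π ^ 2 * R ^ 2) := by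
  set f : ℝ → ENNReal := fun r => if r ≤ R then ENNReal.ofReal (r⁻¹ ^ 2) else 0 with hfdef
  have hf : Measurable f := by
    apply Measurable.ite measurableSet_Iic _ measurable_const
    exact (measurable_id.inv.pow_const 2).ennreal_ofReal
  have h1 : ∫⁻ z in Metric.closedBall (0 : E4) R, ENNReal.ofReal (‖z‖⁻¹ ^ 2)
      = ∫⁻ z : E4, f ‖z‖ := by
    rw [← lintegral_indicator measurableSet_closedBall]
    congr 1
    ext z
    classical
    rw [Set.indicator_apply]
    simp only [mem_closedBall_zero_iff]
    rfl
  have h2 : ∫⁻ r in Set.Ioi (0:ℝ), ENNReal.ofReal (r ^ 3) * f r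
      = ENNReal.ofReal (R ^ 2 / 2) := by
    rw [← Set.Ioc_union_Ioi_eq_Ioi hR.le,
      lintegral_union measurableSet_Ioi (Set.Ioc_disjoint_Ioi le_rfl)]
    have hright : ∫⁻ r in Set.Ioi R, ENNReal.ofReal (r ^ 3) * f r = 0 := by
      calc ∫⁻ r in Set.Ioi R, ENNReal.ofReal (r ^ 3) * f r
          = ∫⁻ _ in Set.Ioi R, (0:ENNReal) := by
            apply setLIntegral_congr_fun measurableSet_Ioi
            exact fun r hr => by
              simp [hfdef, not_le.mpr (Set.mem_Ioi.mp hr)]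
        _ = 0 := lintegral_zero
    have hleft : ∫⁻ r in Set.Ioc 0 R, ENNReal.ofReal (r ^ 3) * f r
        = ∫⁻ r in Set.Ioc 0 R, ENNReal.ofReal r := by
      apply setLIntegral_congr_fun measurableSet_Ioc
      refine fun r hr => ?_
      have hr0 : 0 < r := hr.1
      rw [hfdef]
      simp only [if_pos hr.2]
      rw [← ENNReal.ofReal_mul (by positivity)]
      congr 1
      rw [inv_pow]
      rw [show r ^ 3 = r * r ^ 2 by ring, mul_assoc,
        mul_inv_cancel₀ (by positivity), mul_one]
    rw [hright, hleft, add_zero,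
      ← ofReal_integral_eq_lintegral_ofReal
        (show IntegrableOn (fun r : ℝ => r) (Set.Ioc 0 R) volume from
          continuous_id.integrableOn_Ioc)
        (ae_restrict_of_forall_mem measurableSet_Ioc fun r hr => hr.1.le)]
    rw [← intervalIntegral.integral_of_le hR.le]
    norm_num
  rw [h1, polar4 f hf, h2, ball_vol,
    show (4 : ENNReal) = ENNReal.ofReal (4:ℝ) by simp,
    ← ENNReal.ofReal_mul (by norm_num), ← ENNReal.ofReal_mul (by positivity)]
  congr 1
  ring

/-- The estimate for the second term in the decomposition used in the proof of
Proposition 4.1: the integral of `1/(‖x-y‖²(1+‖y‖⁴))` over the ball of radius `‖x‖/2`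
centered at `x` is at most `4π² ‖x‖⁻²`. -/
theorem secondTerm_estimate (x : EuclideanSpace ℝ (Fin 4)) (hx : x ≠ 0) :
    ∫ y in Metric.closedBall x (‖x‖ / 2),
        1 / (‖x - y‖ ^ 2 * (1 + ‖y‖ ^ 4))
      ≤ 4 * π ^ 2 * ‖x‖⁻¹ ^ 2 := by
  have hxn : 0 < ‖x‖ := norm_pos_iff.mpr hx
  set R : ℝ := ‖x‖ / 2 with hRdef
  have hR : 0 < R := by positivity
  have hmeas : Measurable fun y : E4 => 1 / (‖x - y‖ ^ 2 * (1 + ‖y‖ ^ 4)) := by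
    apply Measurable.div measurable_const
    exact (((measurable_const.sub measurable_id).norm.pow_const 2).mul
      (measurable_const.add (measurable_id.norm.pow_const 4)))
  have hnn : ∀ y : E4, 0 ≤ 1 / (‖x - y‖ ^ 2 * (1 + ‖y‖ ^ 4)) := fun y => by positivity
  rw [MeasureTheory.integral_eq_lintegral_of_nonneg_ae (ae_of_all _ hnn)
    hmeas.aestronglyMeasurable]
  apply ENNReal.toReal_le_of_le_ofReal (by positivity)
  -- pointwise bound on the ball
  have key : ∀ y ∈ Metric.closedBall x R,
      1 / (‖x - y‖ ^ 2 * (1 + ‖y‖ ^ 4)) ≤ 16 / ‖x‖ ^ 4 * ‖x - y‖⁻¹ ^ 2 := by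
    intro y hy
    have hd : ‖x - y‖ ≤ R := by
      rw [Metric.mem_closedBall, dist_comm, dist_eq_norm] at hy
      exact hy
    have hyn : R ≤ ‖y‖ := by
      have h1 : ‖x‖ - ‖y‖ ≤ ‖x - y‖ := norm_sub_norm_le x y
      have : ‖x‖ = 2 * R := by rw [hRdef]; ring
      linarith
    have hb : ‖x‖ ^ 4 / 16 ≤ 1 + ‖y‖ ^ 4 := by
      have h1 : R ^ 4 ≤ ‖y‖ ^ 4 := pow_le_pow_left₀ hR.le hyn 4
      have h2 : R ^ 4 = ‖x‖ ^ 4 / 16 := by rw [hRdef]; ring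
      nlinarith [pow_nonneg (norm_nonneg y) 4]
    have hx4 : (0:ℝ) < ‖x‖ ^ 4 / 16 := by positivity
    have hinv : (1 + ‖y‖ ^ 4)⁻¹ ≤ 16 / ‖x‖ ^ 4 := by
      rw [← inv_div]
      exact inv_anti₀ hx4 hb
    calc 1 / (‖x - y‖ ^ 2 * (1 + ‖y‖ ^ 4))
        = (1 + ‖y‖ ^ 4)⁻¹ * (‖x - y‖ ^ 2)⁻¹ := by
          rw [one_div, mul_inv, mul_comm]
      _ ≤ 16 / ‖x‖ ^ 4 * ‖x - y‖⁻¹ ^ 2 := by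
          rw [inv_pow]
          exact mul_le_mul_of_nonneg_right hinv (by positivity)
  have hmeas2 : Measurable fun y : E4 =>
      ENNReal.ofReal (16 / ‖x‖ ^ 4 * ‖x - y‖⁻¹ ^ 2) :=
    (measurable_const.mul
      (((measurable_const.sub measurable_id).norm.inv.pow_const 2))).ennreal_ofReal
  calc ∫⁻ y in Metric.closedBall x R,
          ENNReal.ofReal (1 / (‖x - y‖ ^ 2 * (1 + ‖y‖ ^ 4)))
      ≤ ∫⁻ y in Metric.closedBall x R,
          ENNReal.ofReal (16 / ‖x‖ ^ 4 * ‖x - y‖⁻¹ ^ 2) :=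
        setLIntegral_mono hmeas2 fun y hy => ENNReal.ofReal_le_ofReal (key y hy)
    _ = ∫⁻ z in Metric.closedBall (0 : E4) R,
          ENNReal.ofReal (16 / ‖x‖ ^ 4 * ‖z‖⁻¹ ^ 2) := by
        have hφ : MeasurePreserving (fun t : E4 => x - t) volume volume :=
          Measure.measurePreserving_sub_left volume x
        have hpre : (fun t : E4 => x - t) ⁻¹' Metric.closedBall x R
            = Metric.closedBall (0 : E4) R := by
          ext z
          simp [Metric.mem_closedBall, dist_eq_norm, sub_sub_cancel_left]
        rw [← hpre, ← hφ.setLIntegral_comp_preimage_emb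
          (Homeomorph.subLeft x).measurableEmbedding
          (fun y => ENNReal.ofReal (16 / ‖x‖ ^ 4 * ‖x - y‖⁻¹ ^ 2))
          (Metric.closedBall x R)]
        apply lintegral_congr
        intro z
        simp [sub_sub_cancel]
    _ = ENNReal.ofReal (16 / ‖x‖ ^ 4) *
          ∫⁻ z in Metric.closedBall (0 : E4) R, ENNReal.ofReal (‖z‖⁻¹ ^ 2) := by
        rw [← lintegral_const_mul _ (by
          exact (measurable_id.norm.inv.pow_const 2).ennreal_ofReal)]
        apply lintegral_congr
        intro z
        rw [← ENNReal.ofReal_mul (by positivity)]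
    _ = ENNReal.ofReal (16 / ‖x‖ ^ 4) * ENNReal.ofReal (π ^ 2 * R ^ 2) := by
        rw [cball_lintegral R hR]
    _ ≤ ENNReal.ofReal (4 * π ^ 2 * ‖x‖⁻¹ ^ 2) := by
        rw [← ENNReal.ofReal_mul (by positivity)]
        apply ENNReal.ofReal_le_ofReal
        rw [hRdef, inv_pow]
        have heq : 16 / ‖x‖ ^ 4 * (π ^ 2 * (‖x‖ / 2) ^ 2) = 4 * π ^ 2 * (‖x‖ ^ 2)⁻¹ := by
          field_simp
          ring
        exact le_of_eq heq
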